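/- Let $A$ be an $n\times m$ complex matrix with $n\le m$, and let $L\subseteq\mathbb{C}^n$ be a linear subspace. Then there exist nonzero vectors $v\in\mathbb{C}^n$, $w\in\mathbb{C}^m$ and scalars $\lambda_1,\lambda_2\in\mathbb{C}$ with $Aw=\lambda_1 v$, $A^t v=\lambda_2 w$ and $v\in L$, if and only if the matrix $AA^t$ has an eigenvector in $L$. -/

import Mathlib

open Matrix

/-- Kalman-variety membership for matrices, `n ≤ m`: a complex `n × m` matrix has a
singular pair `(v, w)` with `v` in the subspace `L` iff `A * Aᵀ` has an eigenvector in `L`. -/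
theorem kalman_singular_pair_iff_eigenvector
    (n m : ℕ) (hnm : n ≤ m) (A : Matrix (Fin n) (Fin m) ℂ)
    (L : Submodule ℂ (Fin n → ℂ)) :
    (∃ (v : Fin n → ℂ) (w : Fin m → ℂ) (l1 l2 : ℂ), v ≠ 0 ∧ w ≠ 0 ∧ v ∈ L ∧
        A.mulVec w = l1 • v ∧ Aᵀ.mulVec v = l2 • w) ↔
      (∃ (v : Fin n → ℂ) (μ : ℂ), v ≠ 0 ∧ v ∈ L ∧ (A * Aᵀ).mulVec v = μ • v) := by
  constructor
  · rintro ⟨v, w, l1, l2, hv, hw, hvL, h1, h2⟩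
    refine ⟨v, l2 * l1, hv, hvL, ?_⟩
    rw [← mulVec_mulVec, h2, mulVec_smul, h1, smul_smul]
  · rintro ⟨v, μ, hv, hvL, hμ⟩
    by_cases hw : Aᵀ.mulVec v = 0
    · -- A is not injective, so pick u ≠ 0 with A *ᵥ u = 0
      have hni : ¬ Function.Injective A.mulVec := by
        intro hinj
        have hmn : m ≤ n := by
          have := LinearMap.finrank_le_finrank_of_injective
            (f := A.mulVecLin) hinj
          simpa using this
        have hnm' : n = m := le_antisymm hnm hmn
        subst hnm'
        have hA : IsUnit A := Matrix.mulVec_injective_iff_isUnit.mp hinj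
        have hAt : IsUnit Aᵀ := (Matrix.isUnit_transpose A).mpr hA
        have hinjt := Matrix.mulVec_injective_iff_isUnit.mpr hAt
        exact hv (hinjt (show Aᵀ *ᵥ v = Aᵀ *ᵥ 0 by simpa using hw))
      have hker : LinearMap.ker A.mulVecLin ≠ ⊥ := by
        intro h
        exact hni (by
          have := LinearMap.ker_eq_bot.mp h
          exact this)
      obtain ⟨u, huk, hu0⟩ := Submodule.exists_mem_ne_zero_of_ne_bot hker
      have hu : A.mulVec u = 0 := huk
      exact ⟨v, u, 0, 0, hv, hu0, hvL, by simp [hu], by simp [hw]⟩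
    · exact ⟨v, Aᵀ.mulVec v, μ, 1, hv, hw, hvL, by
        rw [mulVec_mulVec]; exact hμ, by simp⟩
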